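/- Let P₁, P₂ ⊂ A* be prefix codes. Then P₁ ≡_bd P₂ if and only if ends(P₁) = ends(P₂), i.e., P₁·A^ω = P₂·A^ω. -/

import Mathlib

open List

/-- Finite words over the alphabet A = {0,1}. -/
abbrev W := List Bool

/-- Prefix-comparability of words. -/
def pc (x y : W) : Prop := x <+: y ∨ y <+: x

/-- `RI L` is the right ideal `L·A*` generated by `L`. -/
def RI (L : Set W) : Set W := {y | ∃ x ∈ L, ∃ w : W, y = x ++ w}

/-- `R` is a right ideal of `A*`. -/
def isRightIdeal (R : Set W) : Prop := ∀ x ∈ R, ∀ w : W, x ++ w ∈ R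

/-- End-equivalence of sets: `L₁A*` and `L₂A*` intersect the same right ideals. -/
def endEquiv (L₁ L₂ : Set W) : Prop :=
  ∀ R : Set W, isRightIdeal R → ((R ∩ RI L₁).Nonempty ↔ (R ∩ RI L₂).Nonempty)

/-- A prefix code: no two distinct elements are prefix-comparable. -/
def isPrefixCode (P : Set W) : Prop := ∀ x ∈ P, ∀ y ∈ P, x <+: y → x = y

/-- Right-ideal morphism, as a partial function `A* → A*` (using `Option`):
    whenever `f x = some y`, also `f (x++w) = some (y++w)`.
    (This forces the domain to be a right ideal.) -/
def isRIM (f : W → Option W) : Prop :=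
  ∀ x y : W, f x = some y → ∀ w : W, f (x ++ w) = some (y ++ w)

/-- Domain of a partial function. -/
def Dom (f : W → Option W) : Set W := {x | f x ≠ none}

/-- Image of a partial function. -/
def Im (f : W → Option W) : Set W := {y | ∃ x, f x = some y}

/-- The prefix code of minimal elements generating a right ideal `S`. -/
def prefC (S : Set W) : Set W := {x | x ∈ S ∧ ∀ p : W, p <+: x → p ≠ x → p ∉ S}

/-- Domain code of a right-ideal morphism. -/
def domC (f : W → Option W) : Set W := prefC (Dom f)

/-- Image code of a right-ideal morphism. -/
def imC (f : W → Option W) : Set W := prefC (Im f)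

/-- Image of a set under a partial function. -/
def fImage (f : W → Option W) (L : Set W) : Set W := {y | ∃ x ∈ L, f x = some y}

/-- Preimage of a set under a partial function. -/
def fPreim (f : W → Option W) (S : Set W) : Set W := {x | ∃ y ∈ S, f x = some y}

/-- End-equivalence of right-ideal morphisms: the domains are end-equivalent,
    and the functions agree on the common domain. -/
def endEquivF (f g : W → Option W) : Prop :=
  endEquiv (Dom f) (Dom g) ∧ ∀ x, x ∈ Dom f → x ∈ Dom g → f x = g x

/-- Bounded end-equivalence of sets. -/
def bdSets (P Q : Set W) : Prop :=
  endEquiv P Q ∧ ∃ β : ℕ → ℕ, ∀ x₁ ∈ P, ∀ x₂ ∈ Q, pc x₁ x₂ →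
    x₁.length ≤ β x₂.length ∧ x₂.length ≤ β x₁.length

/-- Bounded end-equivalence of right-ideal morphisms. -/
def bdEquivF (f g : W → Option W) : Prop :=
  bdSets (domC f) (domC g) ∧ endEquivF f g

/-- Concatenation of a finite word with an infinite word. -/
def wcat (x : W) (w : ℕ → Bool) : ℕ → Bool :=
  fun i => if h : i < x.length then x.get ⟨i, h⟩ else w (i - x.length)

/-- `ends L = L·A^ω`: the infinite words having a prefix in `L`. -/
def ends (L : Set W) : Set (ℕ → Bool) := {u | ∃ x ∈ L, ∃ w : ℕ → Bool, u = wcat x w}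

/-- Composition of partial functions: `pcomp f g = f ∘ g` (apply `g` first). -/
def pcomp (f g : W → Option W) : W → Option W := fun x => (g x).bind f

/-- `sub f g`: the partial function `g` extends the partial function `f`. -/
def sub (f g : W → Option W) : Prop := ∀ x y : W, f x = some y → g x = some y


def pref (u : ℕ → Bool) (n : ℕ) : W := List.ofFn (fun i : Fin n => u i)

@[simp] lemma pref_length (u : ℕ → Bool) (n : ℕ) : (pref u n).length = n := by
  simp [pref]

lemma pref_getElem (u : ℕ → Bool) {n i : ℕ} (h : i < n) :
    (pref u n)[i]'(by simpa using h) = u i := by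
  simp [pref]

lemma take_pref (u : ℕ → Bool) (m n : ℕ) : (pref u n).take m = pref u (min m n) := by
  apply List.ext_getElem
  · simp
  · intro i h1 h2
    simp only [List.getElem_take]
    rw [pref_getElem, pref_getElem] <;> simp at h1 h2 <;> omega

lemma pref_prefix (u : ℕ → Bool) {m n : ℕ} (h : m ≤ n) : pref u m <+: pref u n := by
  have := List.take_prefix m (pref u n)
  rwa [take_pref, min_eq_left (by simpa using h)] at this

lemma prefix_pref {u : ℕ → Bool} {n : ℕ} {x : W} (h : x <+: pref u n) :
    pref u x.length = x := by
  have hl : x.length ≤ n := by simpa using h.length_le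
  have := List.prefix_iff_eq_take.mp h
  rw [take_pref, min_eq_left hl] at this
  exact this.symm

lemma wcat_pref (x : W) (w : ℕ → Bool) : pref (wcat x w) x.length = x := by
  apply List.ext_getElem
  · simp
  · intro i h1 h2
    rw [pref_getElem _ (show i < x.length from h2)]
    simp [wcat, h2]

lemma eq_wcat (u : ℕ → Bool) (n : ℕ) : u = wcat (pref u n) (fun i => u (n + i)) := by
  funext i
  simp only [wcat, pref_length]
  split
  · next h => rw [List.get_eq_getElem, pref_getElem _ h]
  · next h => congr 1; omega


lemma mem_ends_iff {L : Set W} {u : ℕ → Bool} : u ∈ ends L ↔ ∃ n, pref u n ∈ L := by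
  constructor
  · rintro ⟨x, hx, w, rfl⟩
    exact ⟨x.length, by rw [wcat_pref]; exact hx⟩
  · rintro ⟨n, hn⟩
    exact ⟨pref u n, hn, _, eq_wcat u n⟩

/-- König's lemma construction: if there are arbitrarily long words extending `x₁`
with no prefix in `Q`, then there is an infinite word extending `x₁` none of whose
prefixes lies in `Q`. -/
lemma konig (x₁ : W) (Q : Set W)
    (H : ∀ m : ℕ, ∃ t : W, x₁ <+: t ∧ (∀ p ∈ Q, ¬ p <+: t) ∧ m ≤ t.length) :
    ∃ u : ℕ → Bool, pref u x₁.length = x₁ ∧ ∀ m, pref u m ∉ Q := by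
  classical
  set T : Set W := {z | x₁ <+: z ∧ ∀ p ∈ Q, ¬ p <+: z} with hT
  set U : W → Prop := fun z => ∀ m : ℕ, ∃ t ∈ T, z <+: t ∧ m ≤ t.length with hU
  have hsnoc : ∀ (z t : W) (h : z.length < t.length), z <+: t →
      z ++ [t[z.length]] <+: t := by
    rintro z t h ⟨r, rfl⟩
    match r with
    | [] => simp at h
    | b :: r' =>
      have : (z ++ b :: r')[z.length] = b := by
        rw [List.getElem_append_right (le_refl _)]
        simp
      rw [this]
      exact ⟨r', by simp⟩
  have step : ∀ z : W, U z → ∃ b : Bool, U (z ++ [b]) := by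
    intro z hz
    by_contra hcon
    push_neg at hcon
    simp only [hU, not_forall, not_exists, not_and, not_le] at hcon
    obtain ⟨m0, hm0⟩ := hcon false
    obtain ⟨m1, hm1⟩ := hcon true
    obtain ⟨t, htT, hzt, hlen⟩ := hz (max (max m0 m1) (z.length + 1))
    have hzlt : z.length < t.length := by omega
    have hext := hsnoc z t hzlt hzt
    cases hb : t[z.length] with
    | false => have := hm0 t htT (by rwa [hb] at hext); omega
    | true => have := hm1 t htT (by rwa [hb] at hext); omega
  -- U x₁ holds
  have hUx : U x₁ := by
    intro m
    obtain ⟨t, h1, h2, h3⟩ := H m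
    exact ⟨t, ⟨h1, h2⟩, h1, h3⟩
  -- build the chain
  let g : ℕ → {z : W // U z} := fun n =>
    Nat.rec ⟨x₁, hUx⟩ (fun _ p => ⟨p.1 ++ [Classical.choose (step p.1 p.2)],
      Classical.choose_spec (step p.1 p.2)⟩) n
  have gstep : ∀ n, (g (n+1)).1 = (g n).1 ++ [Classical.choose (step (g n).1 (g n).2)] :=
    fun n => rfl
  have glen : ∀ n, (g n).1.length = x₁.length + n := by
    intro n
    induction n with
    | zero => rfl
    | succ k ih => rw [gstep, List.length_append, ih]; simp; omega
  have gsucc : ∀ n, (g n).1 <+: (g (n+1)).1 := fun n => ⟨_, (gstep n).symm⟩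
  have gmono : ∀ m n, m ≤ n → (g m).1 <+: (g n).1 := by
    intro m n h
    induction n with
    | zero => cases Nat.le_zero.mp h; exact List.prefix_refl _
    | succ k ih =>
      by_cases h' : m = k + 1
      · subst h'; exact List.prefix_refl _
      · exact (ih (by omega)).trans (gsucc k)
  -- the infinite word
  let u : ℕ → Bool := fun i => (g (i+1)).1[i]'(by have := glen (i+1); omega)
  have key : ∀ n, pref u (x₁.length + n) = (g n).1 := by
    intro n
    apply List.ext_getElem
    · rw [pref_length, glen]
    · intro i h1 h2
      rw [pref_getElem _ (by simpa using h1)]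
      show (g (i+1)).1[i]'_ = _
      rcases le_total (i+1) n with h | h
      · exact (gmono _ _ h).getElem (by have := glen (i+1); omega)
      · exact ((gmono n (i+1) h).getElem h2).symm
  refine ⟨u, key 0, ?_⟩
  intro m hm
  have h1 : pref u m <+: pref u (x₁.length + m) := pref_prefix u (by omega)
  rw [key m] at h1
  obtain ⟨t, htT, hgt, -⟩ := (g m).2 0
  exact htT.2 _ hm (h1.trans hgt)


lemma bound_ext {P₁ P₂ : Set W} (h₂ : isPrefixCode P₂)
    (he : ends P₁ = ends P₂) {x : W} (hx : x ∈ P₁) :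
    ∃ B, ∀ y ∈ P₂, x <+: y → y.length ≤ B := by
  by_contra hcon
  push_neg at hcon
  have H : ∀ m, ∃ t, x <+: t ∧ (∀ p ∈ P₂, ¬ p <+: t) ∧ m ≤ t.length := by
    intro m
    obtain ⟨y, hy, hxy, hlen⟩ := hcon (max m x.length)
    refine ⟨y.take (max m x.length), ?_, ?_, ?_⟩
    · rw [List.prefix_take_iff]
      exact ⟨hxy, le_max_right _ _⟩
    · intro p hp hpt
      have hpy : p <+: y := hpt.trans (List.take_prefix _ _)
      have hpe := h₂ p hp y hy hpy
      have : p.length ≤ (y.take (max m x.length)).length := hpt.length_le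
      simp [hpe] at this
      omega
    · simp; omega
  obtain ⟨u, hu1, hu2⟩ := konig x P₂ H
  have hu : u ∈ ends P₁ := mem_ends_iff.mpr ⟨x.length, by rw [hu1]; exact hx⟩
  rw [he] at hu
  obtain ⟨n, hn⟩ := mem_ends_iff.mp hu
  exact hu2 n hn

def wordsOf (n : ℕ) : Finset W :=
  Finset.image (fun f : Fin n → Bool => List.ofFn f) Finset.univ

lemma mem_wordsOf (x : W) : x ∈ wordsOf x.length :=
  Finset.mem_image.mpr ⟨x.get, Finset.mem_univ _, List.ofFn_get x⟩

noncomputable def extBound (P : Set W) (x : W) : ℕ :=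
  sInf {B | ∀ y ∈ P, x <+: y → y.length ≤ B}

lemma extBound_spec {P : Set W} {x : W} (h : ∃ B, ∀ y ∈ P, x <+: y → y.length ≤ B) :
    ∀ y ∈ P, x <+: y → y.length ≤ extBound P x :=
  Nat.sInf_mem h

lemma prefix_mem_RI {L R : Set W} (hR : isRightIdeal R) {z t : W}
    (hz : z ∈ R) (h : z <+: t) : t ∈ R := by
  obtain ⟨w, rfl⟩ := h
  exact hR z hz w

lemma mem_RI_iff {L : Set W} {t : W} : t ∈ RI L ↔ ∃ x ∈ L, x <+: t := by
  constructor
  · rintro ⟨x, hx, w, rfl⟩; exact ⟨x, hx, w, rfl⟩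
  · rintro ⟨x, hx, w, rfl⟩; exact ⟨x, hx, w, rfl⟩

/-- same ends implies end-equivalence (one direction of the intersection property) -/
lemma endEquiv_of_ends_eq {P₁ P₂ : Set W} (he : ends P₁ = ends P₂) :
    ∀ R : Set W, isRightIdeal R → (R ∩ RI P₁).Nonempty → (R ∩ RI P₂).Nonempty := by
  intro R hR ⟨z, hzR, hz1⟩
  obtain ⟨p, hp, hpz⟩ := mem_RI_iff.mp hz1
  set u : ℕ → Bool := wcat z (fun _ => false) with hu
  have hzu : pref u z.length = z := wcat_pref z _
  have hpu : pref u p.length = p := prefix_pref (by rw [hzu]; exact hpz)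
  have hu1 : u ∈ ends P₁ := mem_ends_iff.mpr ⟨p.length, by rw [hpu]; exact hp⟩
  rw [he] at hu1
  obtain ⟨n, hn⟩ := mem_ends_iff.mp hu1
  refine ⟨pref u (max n z.length), ?_, ?_⟩
  · exact prefix_mem_RI (L := P₁) hR (hzu ▸ hzR) (hzu ▸ pref_prefix u (le_max_right _ _))
  · exact mem_RI_iff.mpr ⟨pref u n, hn, pref_prefix u (le_max_left _ _)⟩

/-- for prefix codes, bounded end-equivalence coincides with having the
    same ends in Cantor space. -/
theorem bdEquiv_iff_ends_eq (P₁ P₂ : Set W)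
    (h₁ : isPrefixCode P₁) (h₂ : isPrefixCode P₂) :
    bdSets P₁ P₂ ↔ ends P₁ = ends P₂ := by
  constructor
  · rintro ⟨hend, β, hβ⟩
    have main : ∀ (Q₁ Q₂ : Set W), (∀ R : Set W, isRightIdeal R →
          ((R ∩ RI Q₁).Nonempty → (R ∩ RI Q₂).Nonempty)) →
        (∀ q ∈ Q₂, ∀ x ∈ Q₁, pc q x → q.length ≤ β x.length) →
        ends Q₁ ⊆ ends Q₂ := by
      intro Q₁ Q₂ heq hb u hu
      obtain ⟨n, hn⟩ := mem_ends_iff.mp hu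
      set m : ℕ := max n (β n) + 1 with hm
      have hR : isRightIdeal (RI {pref u m}) := by
        rintro x ⟨y, hy, w, rfl⟩ w'
        exact ⟨y, hy, w ++ w', by simp⟩
      obtain ⟨z, hzR, hz2⟩ := heq (RI {pref u m}) hR
        ⟨pref u m, ⟨pref u m, rfl, [], by simp⟩,
          mem_RI_iff.mpr ⟨pref u n, hn, pref_prefix u (by omega)⟩⟩
      obtain ⟨q, hq, hqz⟩ := mem_RI_iff.mp hz2
      obtain ⟨x, hx, hxz⟩ := mem_RI_iff.mp hzR
      rcases hx with rfl
      -- q and pref u m are both prefixes of z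
      rcases (List.prefix_or_prefix_of_prefix hqz hxz) with h | h
      · -- q <+: pref u m, so q is a prefix of u
        have : pref u q.length = q := prefix_pref h
        exact mem_ends_iff.mpr ⟨q.length, by rw [this]; exact hq⟩
      · -- pref u m <+: q : contradiction with bound
        exfalso
        have h1 : pref u n <+: q := (pref_prefix u (show n ≤ m by omega)).trans h
        have h2 : q.length ≤ β n := by
          have := hb q hq (pref u n) hn (Or.inr h1)
          simpa using this
        have h3 : m ≤ q.length := by simpa using h.length_le
        omega
    have e12 : ends P₁ ⊆ ends P₂ := by
      refine main P₁ P₂ (fun R hR => (hend R hR).mp) ?_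
      intro q hq x hx hpc
      exact (hβ x hx q hq (Or.symm hpc)).2
    have e21 : ends P₂ ⊆ ends P₁ := by
      refine main P₂ P₁ (fun R hR => (hend R hR).mpr) ?_
      intro q hq x hx hpc
      exact (hβ q hq x hx hpc).1
    exact Set.Subset.antisymm e12 e21
  · intro he
    constructor
    · intro R hR
      exact ⟨endEquiv_of_ends_eq he R hR, endEquiv_of_ends_eq he.symm R hR⟩
    · refine ⟨fun n => max n (max ((wordsOf n).sup (extBound P₂)) ((wordsOf n).sup (extBound P₁))), ?_⟩
      intro x₁ hx₁ x₂ hx₂ hpc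
      have key : ∀ (Q₁ Q₂ : Set W), isPrefixCode Q₂ → ends Q₁ = ends Q₂ →
          ∀ x ∈ Q₁, ∀ y ∈ Q₂, x <+: y →
          y.length ≤ (wordsOf x.length).sup (extBound Q₂) := by
        intro Q₁ Q₂ hc he' x hx y hy hxy
        have h1 : y.length ≤ extBound Q₂ x :=
          extBound_spec (bound_ext hc he' hx) y hy hxy
        exact h1.trans (Finset.le_sup (mem_wordsOf x))
      rcases hpc with h | h
      · have hb := key P₁ P₂ h₂ he x₁ hx₁ x₂ hx₂ h
        have hl := h.length_le
        constructor
        · exact le_max_of_le_left hl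
        · exact le_max_of_le_right (le_max_of_le_left hb)
      · have hb := key P₂ P₁ h₁ he.symm x₂ hx₂ x₁ hx₁ h
        have hl := h.length_le
        constructor
        · exact le_max_of_le_right (le_max_of_le_right hb)
        · exact le_max_of_le_left hl
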